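/- Let X₁,…,Xₙ be i.i.d. real random variables with E(X) = 0, |X| ≤ a almost surely, and Var(X) < ∞. Then for any b > 0, P(|1/n · Σᵢ Xᵢ| > b) ≤ 2·exp(−n·b² / (2·Var(X) + (2/3)·a·b)). -/

import Mathlib

open MeasureTheory ProbabilityTheory Nat

lemma fact_ge : ∀ k : ℕ, 2 * 3 ^ k ≤ Nat.factorial (k + 2) := by
  intro k
  induction k with
  | zero => simp [Nat.factorial]
  | succ k ih =>
    have : k + 1 + 2 = (k + 2) + 1 := by omega
    rw [this, Nat.factorial_succ]
    calc 2 * 3 ^ (k + 1) = 3 * (2 * 3 ^ k) := by ring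
    _ ≤ 3 * (k + 2).factorial := Nat.mul_le_mul_left 3 ih
    _ ≤ (k + 2 + 1) * (k + 2).factorial := Nat.mul_le_mul_right _ (by omega)

lemma exp_poly_bound {x m : ℝ} (hx : |x| ≤ m) (hm : m < 3) :
    Real.exp x ≤ 1 + x + x ^ 2 / (2 * (1 - m / 3)) := by
  have hm0 : 0 ≤ m := le_trans (abs_nonneg x) hx
  have h3 : (0:ℝ) < 1 - m / 3 := by linarith
  have hsum : Summable (fun k : ℕ => x ^ k / (k ! : ℝ)) :=
    Real.summable_pow_div_factorial x
  have hgeo : Summable (fun k : ℕ => x ^ 2 / 2 * (m / 3) ^ k) := by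
    refine Summable.mul_left _ (summable_geometric_of_lt_one (by linarith) (by linarith))
  have hterm : ∀ k : ℕ, x ^ (k + 2) / ((k + 2)! : ℝ) ≤ x ^ 2 / 2 * (m / 3) ^ k := by
    intro k
    have h1 : x ^ (k + 2) ≤ x ^ 2 * m ^ k := by
      calc x ^ (k + 2) ≤ |x ^ (k + 2)| := le_abs_self _
      _ = |x| ^ 2 * |x| ^ k := by rw [abs_pow, pow_add, mul_comm]
      _ ≤ |x| ^ 2 * m ^ k := by gcongr <;> exact abs_nonneg x
      _ = x ^ 2 * m ^ k := by rw [sq_abs]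
    have h2 : (2 * 3 ^ k : ℝ) ≤ ((k + 2)! : ℝ) := by
      exact_mod_cast fact_ge k
    have h2' : (0:ℝ) < 2 * 3 ^ k := by positivity
    calc x ^ (k + 2) / ((k + 2)! : ℝ) ≤ (x ^ 2 * m ^ k) / (2 * 3 ^ k) := by
          apply div_le_div₀ (by positivity) h1 h2' h2
    _ = x ^ 2 / 2 * (m / 3) ^ k := by
          rw [div_pow]; ring
  have htail : Summable (fun k : ℕ => x ^ (k + 2) / ((k + 2)! : ℝ)) :=
    (summable_nat_add_iff 2).2 hsum
  have hexp : Real.exp x = ∑' k : ℕ, x ^ k / (k ! : ℝ) := by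
    rw [Real.exp_eq_exp_ℝ, NormedSpace.exp_eq_tsum_div]
  rw [hexp]
  have hsplit : ∑' k : ℕ, x ^ k / (k ! : ℝ)
      = 1 + x + ∑' k : ℕ, x ^ (k + 2) / ((k + 2)! : ℝ) := by
    rw [Summable.tsum_eq_zero_add hsum, Summable.tsum_eq_zero_add ((summable_nat_add_iff 1).2 hsum)]
    simp [Nat.factorial]
    ring
  rw [hsplit]
  have : ∑' k : ℕ, x ^ (k + 2) / ((k + 2)! : ℝ) ≤ x ^ 2 / (2 * (1 - m / 3)) := by
    calc ∑' k : ℕ, x ^ (k + 2) / ((k + 2)! : ℝ)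
        ≤ ∑' k : ℕ, x ^ 2 / 2 * (m / 3) ^ k := Summable.tsum_le_tsum hterm htail hgeo
    _ = x ^ 2 / 2 * (1 - m / 3)⁻¹ := by
        rw [tsum_mul_left, tsum_geometric_of_lt_one (by linarith) (by linarith)]
    _ = x ^ 2 / (2 * (1 - m / 3)) := by
        field_simp
  linarith

lemma bernstein_one_sided
    {Ω : Type*} [MeasureSpace Ω] [IsProbabilityMeasure (ℙ : Measure Ω)]
    (n : ℕ) (X : Fin n → Ω → ℝ) (X₀ : Ω → ℝ) (a : ℝ) (ha : 0 < a)
    (hmeas : ∀ i, Measurable (X i)) (hmeas₀ : Measurable X₀)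
    (hindep : iIndepFun X ℙ)
    (hident : ∀ i, Measure.map (X i) ℙ = Measure.map X₀ ℙ)
    (hmean : ∫ ω, X₀ ω = 0)
    (hbdd : ∀ᵐ ω, |X₀ ω| ≤ a)
    (hvar : MemLp X₀ 2)
    (hσ : 0 < variance X₀ ℙ)
    (b : ℝ) (hb : 0 < b) :
    (ℙ {ω | (n : ℝ) * b ≤ ∑ i, X i ω}).toReal
      ≤ Real.exp (-((n : ℝ) * b ^ 2) / (2 * variance X₀ ℙ + (2 / 3) * a * b)) := by
  set σ2 := variance X₀ ℙ with hσ2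
  set d : ℝ := σ2 + a * b / 3 with hd
  have hd0 : 0 < d := by positivity
  set t : ℝ := b / d with ht
  have ht0 : 0 < t := by positivity
  have hta : t * a < 3 := by
    rw [ht, div_mul_eq_mul_div, div_lt_iff₀ hd0]
    have h3d : 3 * d = 3 * σ2 + b * a := by rw [hd]; ring
    linarith
  have hta0 : 0 ≤ t * a := by positivity
  have h1ta : 0 < 1 - t * a / 3 := by linarith
  set c : ℝ := t ^ 2 * σ2 / (2 * (1 - t * a / 3)) with hc
  -- mgf bound for X₀
  have hint₀ : Integrable (fun ω => Real.exp (t * X₀ ω)) ℙ := by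
    refine (integrable_const (Real.exp (t * a))).mono'
      ((hmeas₀.const_mul t).exp.aestronglyMeasurable) ?_
    filter_upwards [hbdd] with ω hω
    rw [Real.norm_eq_abs, Real.abs_exp, Real.exp_le_exp]
    calc t * X₀ ω ≤ t * |X₀ ω| := by
          exact mul_le_mul_of_nonneg_left (le_abs_self _) ht0.le
    _ ≤ t * a := mul_le_mul_of_nonneg_left hω ht0.le
  have hintX : Integrable X₀ ℙ := hvar.integrable one_le_two
  have hintX2 : Integrable (fun ω => X₀ ω ^ 2) ℙ := hvar.integrable_sq
  have hEX2 : ∫ ω, X₀ ω ^ 2 = σ2 := by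
    have h := variance_eq_sub hvar (μ := ℙ)
    rw [hσ2, h]
    have : (ℙ[X₀ ^ 2] : ℝ) = ∫ ω, X₀ ω ^ 2 := by
      congr 1
    rw [this, hmean]
    ring
  have hmgf₀ : mgf X₀ ℙ t ≤ Real.exp c := by
    have hptwise : ∀ᵐ ω, Real.exp (t * X₀ ω)
        ≤ 1 + t * X₀ ω + (t ^ 2 / (2 * (1 - t * a / 3))) * X₀ ω ^ 2 := by
      filter_upwards [hbdd] with ω hω
      have := exp_poly_bound (x := t * X₀ ω) (m := t * a)
        (by rw [abs_mul, abs_of_pos ht0]; exact mul_le_mul_of_nonneg_left hω ht0.le) hta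
      calc Real.exp (t * X₀ ω) ≤ 1 + t * X₀ ω + (t * X₀ ω) ^ 2 / (2 * (1 - t * a / 3)) := this
      _ = 1 + t * X₀ ω + (t ^ 2 / (2 * (1 - t * a / 3))) * X₀ ω ^ 2 := by ring
    have hint_rhs : Integrable
        (fun ω => 1 + t * X₀ ω + (t ^ 2 / (2 * (1 - t * a / 3))) * X₀ ω ^ 2) ℙ := by
      exact ((integrable_const 1).add (hintX.const_mul t)).add (hintX2.const_mul _)
    have h1 : mgf X₀ ℙ t ≤ ∫ ω, (1 + t * X₀ ω + (t ^ 2 / (2 * (1 - t * a / 3))) * X₀ ω ^ 2) :=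
      integral_mono_ae hint₀ hint_rhs hptwise
    have i0 : Integrable (fun _ : Ω => (1 : ℝ)) ℙ := integrable_const 1
    have i1 : Integrable (fun ω => 1 + t * X₀ ω) ℙ := i0.add (hintX.const_mul t)
    have i2 : Integrable (fun ω => (t ^ 2 / (2 * (1 - t * a / 3))) * X₀ ω ^ 2) ℙ :=
      hintX2.const_mul _
    have h2 : ∫ ω, (1 + t * X₀ ω + (t ^ 2 / (2 * (1 - t * a / 3))) * X₀ ω ^ 2) = 1 + c := by
      rw [integral_add i1 i2, integral_add i0 (hintX.const_mul t),
        integral_const, integral_const_mul, integral_const_mul, hmean, hEX2]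
      simp [hc]
      ring
    rw [h2] at h1
    calc mgf X₀ ℙ t ≤ 1 + c := h1
    _ ≤ Real.exp c := by linarith [Real.add_one_le_exp c]
  -- transfer to each X i
  have hbdd_i : ∀ i, ∀ᵐ ω, |X i ω| ≤ a := by
    intro i
    have hs : MeasurableSet {x : ℝ | a < |x|} := measurableSet_lt measurable_const measurable_abs
    have h0 : ℙ {ω | a < |X₀ ω|} = 0 := by
      refine measure_eq_zero_iff_ae_notMem.mpr ?_
      filter_upwards [hbdd] with ω hω
      simp only [Set.mem_setOf_eq, not_lt]
      exact hω
    have : ℙ (X i ⁻¹' {x : ℝ | a < |x|}) = ℙ (X₀ ⁻¹' {x : ℝ | a < |x|}) := by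
      rw [← Measure.map_apply (hmeas i) hs, ← Measure.map_apply hmeas₀ hs, hident i]
    rw [ae_iff]
    push_neg
    calc ℙ {ω | a < |X i ω|} = ℙ (X i ⁻¹' {x : ℝ | a < |x|}) := rfl
    _ = ℙ (X₀ ⁻¹' {x : ℝ | a < |x|}) := this
    _ = 0 := h0
  have hint_i : ∀ i, Integrable (fun ω => Real.exp (t * X i ω)) ℙ := by
    intro i
    refine (integrable_const (Real.exp (t * a))).mono'
      (((hmeas i).const_mul t).exp.aestronglyMeasurable) ?_
    filter_upwards [hbdd_i i] with ω hω
    rw [Real.norm_eq_abs, Real.abs_exp, Real.exp_le_exp]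
    calc t * X i ω ≤ t * |X i ω| := mul_le_mul_of_nonneg_left (le_abs_self _) ht0.le
    _ ≤ t * a := mul_le_mul_of_nonneg_left hω ht0.le
  have hmgf_i : ∀ i, mgf (X i) ℙ t = mgf X₀ ℙ t := by
    intro i
    have hg : AEStronglyMeasurable (fun x : ℝ => Real.exp (t * x)) (Measure.map X₀ ℙ) :=
      ((measurable_const.mul measurable_id).exp).aestronglyMeasurable
    have hg' : AEStronglyMeasurable (fun x : ℝ => Real.exp (t * x)) (Measure.map (X i) ℙ) :=
      ((measurable_const.mul measurable_id).exp).aestronglyMeasurable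
    calc mgf (X i) ℙ t = ∫ x, Real.exp (t * x) ∂(Measure.map (X i) ℙ) :=
          (integral_map (hmeas i).aemeasurable hg').symm
    _ = ∫ x, Real.exp (t * x) ∂(Measure.map X₀ ℙ) := by rw [hident i]
    _ = mgf X₀ ℙ t := integral_map hmeas₀.aemeasurable hg
  -- Chernoff
  have hchern := measure_ge_le_exp_mul_mgf (μ := ℙ) (X := ∑ i, X i)
    ((n : ℝ) * b) ht0.le (hindep.integrable_exp_mul_sum hmeas (fun i _ => hint_i i) (s := Finset.univ))
  have hsum_eq : (fun ω => (∑ i, X i) ω) = fun ω => ∑ i, X i ω := by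
    ext ω; simp [Finset.sum_apply]
  have hmgf_sum : mgf (∑ i, X i) ℙ t = (mgf X₀ ℙ t) ^ n := by
    rw [hindep.mgf_sum hmeas]
    simp [hmgf_i]
  have hset : {ω | (n : ℝ) * b ≤ (∑ i, X i) ω} = {ω | (n : ℝ) * b ≤ ∑ i, X i ω} := by
    ext ω; simp [Finset.sum_apply]
  rw [hset] at hchern
  have hkey : (ℙ {ω | (n : ℝ) * b ≤ ∑ i, X i ω}).toReal
      ≤ Real.exp (-t * ((n : ℝ) * b)) * Real.exp c ^ n := by
    refine hchern.trans ?_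
    rw [hmgf_sum]
    gcongr <;> first
      | exact mgf_nonneg
      | exact hmgf₀
  refine hkey.trans ?_
  rw [← Real.exp_nat_mul, ← Real.exp_add, Real.exp_le_exp]
  have hceq : c = t * b / 2 := by
    rw [hc, ht]
    have : 1 - b / d * a / 3 = σ2 / d := by
      field_simp
      ring
    rw [this]
    field_simp
  rw [hceq]
  have h2d : 2 * σ2 + 2 / 3 * a * b = 2 * d := by rw [hd]; ring
  rw [h2d]
  have hdne : d ≠ 0 := ne_of_gt hd0
  have heq : -t * ((n : ℝ) * b) + (n : ℝ) * (t * b / 2) = -((n : ℝ) * b ^ 2) / (2 * d) := by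
    rw [ht]; field_simp; ring
  linarith [heq.le]


/-- Bernstein's inequality: if `X₁,…,Xₙ` are i.i.d. copies of a centered random
variable `X₀` with `|X₀| ≤ a` a.s. and finite variance, then for every `b > 0`,
`ℙ(|n⁻¹ Σᵢ Xᵢ| > b) ≤ 2·exp(−n b² / (2·Var(X₀) + (2/3)·a·b))`. -/
theorem bernstein_inequality
    {Ω : Type*} [MeasureSpace Ω] [IsProbabilityMeasure (ℙ : Measure Ω)]
    (n : ℕ) (X : Fin n → Ω → ℝ) (X₀ : Ω → ℝ) (a : ℝ) (ha : 0 < a)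
    (hmeas : ∀ i, Measurable (X i)) (hmeas₀ : Measurable X₀)
    (hindep : iIndepFun X ℙ)
    (hident : ∀ i, Measure.map (X i) ℙ = Measure.map X₀ ℙ)
    (hmean : ∫ ω, X₀ ω = 0)
    (hbdd : ∀ᵐ ω, |X₀ ω| ≤ a)
    (hvar : MemLp X₀ 2)
    (b : ℝ) (hb : 0 < b) :
    ℙ {ω | b < |(n : ℝ)⁻¹ * ∑ i, X i ω|}
      ≤ ENNReal.ofReal (2 * Real.exp
          (-(n * b ^ 2) / (2 * variance X₀ ℙ + (2 / 3) * a * b))) := by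
  rcases Nat.eq_zero_or_pos n with hn | hn
  · subst hn
    have hempty : {ω : Ω | b < |((0 : ℕ) : ℝ)⁻¹ * ∑ i : Fin 0, X i ω|} = ∅ := by
      ext ω
      simp only [Set.mem_setOf_eq, Set.mem_empty_iff_false, iff_false, not_lt,
        Finset.univ_eq_empty, Finset.sum_empty, mul_zero, abs_zero]
      positivity
    rw [hempty]
    simp
  rcases eq_or_lt_of_le (variance_nonneg X₀ ℙ) with hσ | hσ
  · -- degenerate case: variance zero, X₀ = 0 a.s.
    have hEX2 : ∫ ω, X₀ ω ^ 2 = 0 := by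
      have h := variance_eq_sub hvar (μ := ℙ)
      have h2 : (ℙ[X₀ ^ 2] : ℝ) = ∫ ω, X₀ ω ^ 2 := by congr 1
      rw [← hσ, hmean] at h
      rw [← h2]
      linarith [h]
    have hX₀0 : ∀ᵐ ω, X₀ ω = 0 := by
      have h := (integral_eq_zero_iff_of_nonneg_ae
        (Filter.Eventually.of_forall fun ω => sq_nonneg (X₀ ω)) hvar.integrable_sq).mp hEX2
      filter_upwards [h] with ω hω
      exact pow_eq_zero_iff (n := 2) (by norm_num) |>.mp hω
    have hXi0 : ∀ i, ∀ᵐ ω, X i ω = 0 := by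
      intro i
      have hs : MeasurableSet {x : ℝ | x ≠ 0} :=
        (measurableSet_singleton 0).compl
      have h0 : ℙ {ω | X₀ ω ≠ 0} = 0 := by
        refine measure_eq_zero_iff_ae_notMem.mpr ?_
        filter_upwards [hX₀0] with ω hω
        simp [hω]
      have hmap : ℙ (X i ⁻¹' {x : ℝ | x ≠ 0}) = ℙ (X₀ ⁻¹' {x : ℝ | x ≠ 0}) := by
        rw [← Measure.map_apply (hmeas i) hs, ← Measure.map_apply hmeas₀ hs, hident i]
      rw [ae_iff]
      exact hmap.trans h0
    have hsum0 : ∀ᵐ ω, ∑ i, X i ω = 0 := by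
      have h := (MeasureTheory.ae_all_iff).2 hXi0
      filter_upwards [h] with ω hω
      simp [hω]
    have hzero : ℙ {ω | b < |(n : ℝ)⁻¹ * ∑ i, X i ω|} = 0 := by
      refine measure_eq_zero_iff_ae_notMem.mpr ?_
      filter_upwards [hsum0] with ω hω
      simp only [Set.mem_setOf_eq, hω, mul_zero, abs_zero, not_lt]
      positivity
    rw [hzero]
    exact _root_.zero_le
  · -- main case
    have hA := bernstein_one_sided n X X₀ a ha hmeas hmeas₀ hindep hident hmean hbdd hvar hσ b hb
    have hmeasN : ∀ i, Measurable (fun ω => -(X i ω)) := fun i => (hmeas i).neg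
    have hindepN : iIndepFun (fun i (ω : Ω) => -(X i ω)) ℙ :=
      hindep.comp (fun _ => fun x : ℝ => -x) (fun _ => measurable_neg)
    have hidentN : ∀ i, Measure.map (fun ω => -(X i ω)) ℙ
        = Measure.map (fun ω => -(X₀ ω)) ℙ := by
      intro i
      have h1 : (fun ω => -(X i ω)) = (fun x : ℝ => -x) ∘ X i := rfl
      have h2 : (fun ω => -(X₀ ω)) = (fun x : ℝ => -x) ∘ X₀ := rfl
      rw [h1, h2, ← Measure.map_map measurable_neg (hmeas i),
        ← Measure.map_map measurable_neg hmeas₀, hident i]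
    have hmeanN : ∫ ω, -(X₀ ω) = 0 := by
      rw [integral_neg, hmean, neg_zero]
    have hbddN : ∀ᵐ ω, |(-(X₀ ω))| ≤ a := by
      filter_upwards [hbdd] with ω hω
      simpa [abs_neg] using hω
    have hvarN : MemLp (fun ω => -(X₀ ω)) 2 (μ := ℙ) := hvar.neg
    have hvar_eq : variance (fun ω => -(X₀ ω)) ℙ = variance X₀ ℙ := by
      have h : (fun ω => -(X₀ ω)) = fun ω => (-1 : ℝ) * X₀ ω := by funext ω; ring
      rw [h, variance_const_mul]
      norm_num
    have hσN : 0 < variance (fun ω => -(X₀ ω)) ℙ := by rw [hvar_eq]; exact hσ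
    have hB := bernstein_one_sided n (fun i ω => -(X i ω)) (fun ω => -(X₀ ω)) a ha
      hmeasN (hmeas₀.neg) hindepN hidentN hmeanN hbddN hvarN hσN b hb
    rw [hvar_eq] at hB
    set e : ℝ := Real.exp (-((n : ℝ) * b ^ 2) / (2 * variance X₀ ℙ + 2 / 3 * a * b)) with he
    have hsub : {ω | b < |(n : ℝ)⁻¹ * ∑ i, X i ω|}
        ⊆ {ω | (n : ℝ) * b ≤ ∑ i, X i ω} ∪ {ω | (n : ℝ) * b ≤ ∑ i, -(X i ω)} := by
      intro ω hω
      simp only [Set.mem_setOf_eq, Set.mem_union] at *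
      have hn0 : (0 : ℝ) < n := by exact_mod_cast hn
      rcases lt_abs.mp hω with h | h
      · left
        have h2 := mul_lt_mul_of_pos_left h hn0
        rw [← mul_assoc, mul_inv_cancel₀ hn0.ne', one_mul] at h2
        exact h2.le
      · right
        have h2 := mul_lt_mul_of_pos_left h hn0
        rw [mul_neg, ← mul_assoc, mul_inv_cancel₀ hn0.ne', one_mul] at h2
        have h3 : ∑ i, -(X i ω) = -∑ i, X i ω := by
          rw [Finset.sum_neg_distrib]
        rw [h3]
        exact h2.le
    calc ℙ {ω | b < |(n : ℝ)⁻¹ * ∑ i, X i ω|}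
        ≤ ℙ ({ω | (n : ℝ) * b ≤ ∑ i, X i ω} ∪ {ω | (n : ℝ) * b ≤ ∑ i, -(X i ω)}) :=
          measure_mono hsub
    _ ≤ ℙ {ω | (n : ℝ) * b ≤ ∑ i, X i ω} + ℙ {ω | (n : ℝ) * b ≤ ∑ i, -(X i ω)} :=
          measure_union_le _ _
    _ ≤ ENNReal.ofReal e + ENNReal.ofReal e := by
        refine add_le_add ?_ ?_
        · exact (ENNReal.le_ofReal_iff_toReal_le (measure_ne_top _ _)
            (Real.exp_nonneg _)).mpr hA
        · exact (ENNReal.le_ofReal_iff_toReal_le (measure_ne_top _ _)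
            (Real.exp_nonneg _)).mpr hB
    _ = ENNReal.ofReal (2 * Real.exp
          (-(n * b ^ 2) / (2 * variance X₀ ℙ + (2 / 3) * a * b))) := by
        rw [← ENNReal.ofReal_add (Real.exp_nonneg _) (Real.exp_nonneg _)]
        congr 1
        ring
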